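/- arXiv:2006.03631 — 6 statements merged into one kernel-verified Lean document; each statement's English description precedes it below -/
import Mathlib

section
/- Fix a task T ∈ Ω_T. Then for all θ', θ'' ∈ ℝ^p, ‖∇_{θ'} L^out(U(θ',T),T) − ∇_{θ''} L^out(U(θ'',T),T)‖₂ ≤ ( L₂(1 + αL₂)^{2r} + (L₁L₃/L₂)((1 + αL₂)^{2r} − 1) ) ‖θ' − θ''‖₂, where ∇_θ L^out(U(θ,T),T) denotes the gradient of the map θ ↦ L^out(U(θ,T),T). -/
open MeasureTheory ProbabilityTheory Filter Asymptotics

noncomputable section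

/-- `ℝ^p` with the Euclidean inner product. -/
abbrev Vec (p : ℕ) := EuclideanSpace ℝ (Fin p)

/-- One inner gradient-descent step `φ ↦ φ − α ∇_φ L^in(φ, T)`. -/
def gdStep (p : ℕ) (α : ℝ) {Ωt : Type*} (Lin : Vec p → Ωt → ℝ) (T : Ωt) (φ : Vec p) : Vec p :=
  φ - α • gradient (fun ψ => Lin ψ T) φ

/-- The `r`-step inner gradient-descent map `U(θ, T)`. -/
def U (p : ℕ) (α : ℝ) (r : ℕ) {Ωt : Type*} (Lin : Vec p → Ωt → ℝ) (θ : Vec p) (T : Ωt) : Vec p :=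
  (gdStep p α Lin T)^[r] θ

/-- Assumption 1 of the paper: `L^in(·,T), L^out(·,T)` are twice differentiable with
uniformly bounded gradients (for `L^out`) and Hessians, and the Hessian of `L^in`
is uniformly Lipschitz.  The Hessian is `fderiv ℝ (gradient ·)` and `‖·‖` on it is
the operator norm. -/
def Assumption1 (p : ℕ) {Ωt : Type*} (Lin Lout : Vec p → Ωt → ℝ) (L₁ L₂ L₃ : ℝ) : Prop :=
  0 < L₁ ∧ 0 < L₂ ∧ 0 < L₃ ∧
  ∀ T : Ωt,
    Differentiable ℝ (fun φ => Lin φ T) ∧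
    Differentiable ℝ (gradient (fun φ => Lin φ T)) ∧
    Differentiable ℝ (fun φ => Lout φ T) ∧
    Differentiable ℝ (gradient (fun φ => Lout φ T)) ∧
    (∀ φ, ‖gradient (fun ψ => Lout ψ T) φ‖ ≤ L₁) ∧
    (∀ φ, ‖fderiv ℝ (gradient (fun ψ => Lin ψ T)) φ‖ ≤ L₂) ∧
    (∀ φ, ‖fderiv ℝ (gradient (fun ψ => Lout ψ T)) φ‖ ≤ L₂) ∧
    (∀ φ ψ, ‖fderiv ℝ (gradient (fun χ => Lin χ T)) φ
              - fderiv ℝ (gradient (fun χ => Lin χ T)) ψ‖ ≤ L₃ * ‖φ - ψ‖)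

/-- The exact outer gradient `∇_θ L^out(U(θ,T), T)` of the map `θ ↦ L^out(U(θ,T),T)`. -/
def outerGrad (p : ℕ) (α : ℝ) (r : ℕ) {Ωt : Type*} (Lin Lout : Vec p → Ωt → ℝ)
    (θ : Vec p) (T : Ωt) : Vec p :=
  gradient (fun θ' => Lout (U p α r Lin θ' T) T) θ

/-- The BLO objective `M(θ) = E_{T ∼ p(T)}[L^out(U(θ,T),T)]`. -/
def Mobj (p : ℕ) (α : ℝ) (r : ℕ) {Ωt : Type*} [MeasurableSpace Ωt] (μ : Measure Ωt)
    (Lin Lout : Vec p → Ωt → ℝ) (θ : Vec p) : ℝ :=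
  ∫ T, Lout (U p α r Lin θ T) T ∂μ

/-- Assumption 2 of the paper: `M(θ)`, `∇M(θ)` and `E[∇_θ L^out(U(θ,T),T)]` are
well-defined, `∇M(θ) = E[∇_θ L^out(U(θ,T),T)]`, and `M* = inf M > −∞`. -/
def Assumption2 (p : ℕ) (α : ℝ) (r : ℕ) {Ωt : Type*} [MeasurableSpace Ωt] (μ : Measure Ωt)
    (Lin Lout : Vec p → Ωt → ℝ) : Prop :=
  (∀ θ, Integrable (fun T => Lout (U p α r Lin θ T) T) μ) ∧
  (∀ θ T, DifferentiableAt ℝ (fun θ' => Lout (U p α r Lin θ' T) T) θ) ∧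
  (∀ θ, Integrable (fun T => outerGrad p α r Lin Lout θ T) μ) ∧
  (∀ θ, DifferentiableAt ℝ (Mobj p α r μ Lin Lout) θ) ∧
  (∀ θ, gradient (Mobj p α r μ Lin Lout) θ = ∫ T, outerGrad p α r Lin Lout θ T ∂μ) ∧
  BddBelow (Set.range (Mobj p α r μ Lin Lout))

/-- The UFO-BLO gradient estimator
`G(θ,T,x) = ∇_{φ_r} L^out(φ_r,T) + (x/q)(∇_θ L^out(φ_r,T) − ∇_{φ_r} L^out(φ_r,T))`. -/
def Gest (p : ℕ) (α : ℝ) (r : ℕ) (q : ℝ) {Ωt : Type*} (Lin Lout : Vec p → Ωt → ℝ)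
    (θ : Vec p) (T : Ωt) (x : ℝ) : Vec p :=
  gradient (fun φ => Lout φ T) (U p α r Lin θ T)
    + (x / q) • (outerGrad p α r Lin Lout θ T
                  - gradient (fun φ => Lout φ T) (U p α r Lin θ T))

/-- The `Bernoulli(q)` distribution on `Bool`. -/
def bern (q : ℝ) : Measure Bool :=
  (ENNReal.ofReal q) • Measure.dirac true + (ENNReal.ofReal (1 - q)) • Measure.dirac false


/-!
STATEMENT 2: for a fixed task `T`, the outer gradient map
`θ ↦ ∇_θ L^out(U(θ,T),T)` is Lipschitz with constant
`L₂(1+αL₂)^(2r) + (L₁L₃/L₂)((1+αL₂)^(2r) − 1)`.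
-/


set_option maxHeartbeats 1000000

section AuxLemmas

lemma grad_sub_norm_eq {p : ℕ} (f : Vec p → ℝ) (x y : Vec p) :
    ‖gradient f x - gradient f y‖ = ‖fderiv ℝ f x - fderiv ℝ f y‖ := by
  have h : gradient f x - gradient f y
      = (InnerProductSpace.toDual ℝ (Vec p)).symm (fderiv ℝ f x - fderiv ℝ f y) := by
    rw [map_sub]; rfl
  rw [h, LinearIsometryEquiv.norm_map]

lemma fderiv_norm_eq_grad {p : ℕ} (f : Vec p → ℝ) (x : Vec p) :
    ‖fderiv ℝ f x‖ = ‖gradient f x‖ := by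
  rw [show gradient f x = (InnerProductSpace.toDual ℝ (Vec p)).symm (fderiv ℝ f x) from rfl,
    LinearIsometryEquiv.norm_map]

lemma lip_of_fderiv_bound {p : ℕ} {E : Type*} [NormedAddCommGroup E] [NormedSpace ℝ E]
    {f : Vec p → E} {C : ℝ} (hf : Differentiable ℝ f)
    (hb : ∀ x, ‖fderiv ℝ f x‖ ≤ C) (x y : Vec p) : ‖f x - f y‖ ≤ C * ‖x - y‖ :=
  Convex.norm_image_sub_le_of_norm_fderiv_le (𝕜 := ℝ)
    (fun z _ => hf z) (fun z _ => hb z)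
    convex_univ (Set.mem_univ y) (Set.mem_univ x)

lemma iter_bounds {p : ℕ} (α L₂ L₃ : ℝ) (hα : 0 < α) (hL₂ : 0 < L₂) (hL₃ : 0 ≤ L₃)
    (G : Vec p → Vec p) (hGdiff : Differentiable ℝ G)
    (hGb : ∀ φ, ‖fderiv ℝ G φ‖ ≤ L₂)
    (hGLip : ∀ φ ψ, ‖fderiv ℝ G φ - fderiv ℝ G ψ‖ ≤ L₃ * ‖φ - ψ‖) (n : ℕ) :
    Differentiable ℝ ((fun φ : Vec p => φ - α • G φ)^[n]) ∧
    (∀ θ, ‖fderiv ℝ ((fun φ : Vec p => φ - α • G φ)^[n]) θ‖ ≤ (1 + α * L₂) ^ n) ∧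
    (∀ x y, ‖(fun φ : Vec p => φ - α • G φ)^[n] x - (fun φ : Vec p => φ - α • G φ)^[n] y‖
        ≤ (1 + α * L₂) ^ n * ‖x - y‖) ∧
    (∀ x y, ‖fderiv ℝ ((fun φ : Vec p => φ - α • G φ)^[n]) x
              - fderiv ℝ ((fun φ : Vec p => φ - α • G φ)^[n]) y‖
        ≤ L₃ / L₂ * ((1 + α * L₂) ^ (2 * n) - 1) * ‖x - y‖) := by
  set f : Vec p → Vec p := fun φ => φ - α • G φ with hf
  set B : ℝ := 1 + α * L₂ with hBdef
  have hB : 1 ≤ B := by have := mul_pos hα hL₂; simp [hBdef]; linarith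
  have hB0 : 0 ≤ B := by linarith
  -- one-step facts
  have hfd : Differentiable ℝ f := fun φ =>
    (differentiableAt_fun_id.sub ((hGdiff φ).const_smul α))
  have hfderiv : ∀ φ, fderiv ℝ f φ
      = ContinuousLinearMap.id ℝ (Vec p) - α • fderiv ℝ G φ := by
    intro φ
    have h2 : HasFDerivAt (fun φ : Vec p => α • G φ) (α • fderiv ℝ G φ) φ :=
      ((hGdiff φ).hasFDerivAt).const_smul α
    have h1 : HasFDerivAt (fun φ : Vec p => φ) (ContinuousLinearMap.id ℝ (Vec p)) φ :=
      hasFDerivAt_id φ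
    exact (h1.sub h2).fderiv
  have hfnorm : ∀ φ, ‖fderiv ℝ f φ‖ ≤ B := by
    intro φ
    rw [hfderiv]
    calc ‖ContinuousLinearMap.id ℝ (Vec p) - α • fderiv ℝ G φ‖
        ≤ ‖ContinuousLinearMap.id ℝ (Vec p)‖ + ‖α • fderiv ℝ G φ‖ := norm_sub_le _ _
      _ ≤ 1 + α * L₂ := by
          have h1 : ‖α • fderiv ℝ G φ‖ = α * ‖fderiv ℝ G φ‖ := by
            rw [norm_smul, Real.norm_of_nonneg hα.le]
          have := ContinuousLinearMap.norm_id_le (𝕜 := ℝ) (E := Vec p)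
          have := mul_le_mul_of_nonneg_left (hGb φ) hα.le
          linarith
  have hfdLip : ∀ x y, ‖fderiv ℝ f x - fderiv ℝ f y‖ ≤ α * L₃ * ‖x - y‖ := by
    intro x y
    rw [hfderiv, hfderiv]
    have h1 : ContinuousLinearMap.id ℝ (Vec p) - α • fderiv ℝ G x
        - (ContinuousLinearMap.id ℝ (Vec p) - α • fderiv ℝ G y)
        = α • (fderiv ℝ G y - fderiv ℝ G x) := by
      rw [smul_sub]; abel
    rw [h1, norm_smul, Real.norm_of_nonneg hα.le, norm_sub_rev]
    calc α * ‖fderiv ℝ G x - fderiv ℝ G y‖ ≤ α * (L₃ * ‖x - y‖) :=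
          mul_le_mul_of_nonneg_left (hGLip x y) hα.le
      _ = α * L₃ * ‖x - y‖ := by ring
  have hGLipVal : ∀ x y, ‖G x - G y‖ ≤ L₂ * ‖x - y‖ :=
    lip_of_fderiv_bound hGdiff hGb
  have hfLip : ∀ x y, ‖f x - f y‖ ≤ B * ‖x - y‖ := by
    intro x y
    have h1 : f x - f y = (x - y) - α • (G x - G y) := by simp [hf, smul_sub]; abel
    rw [h1]
    calc ‖(x - y) - α • (G x - G y)‖ ≤ ‖x - y‖ + ‖α • (G x - G y)‖ := norm_sub_le _ _
      _ ≤ ‖x - y‖ + α * (L₂ * ‖x - y‖) := by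
          rw [norm_smul, Real.norm_of_nonneg hα.le]
          exact add_le_add (le_refl _) (mul_le_mul_of_nonneg_left (hGLipVal x y) hα.le)
      _ = B * ‖x - y‖ := by rw [hBdef]; ring
  induction n with
  | zero =>
      refine ⟨by simpa using differentiable_id, ?_, ?_, ?_⟩
      · intro θ
        rw [Function.iterate_zero]
        rw [show fderiv ℝ (id : Vec p → Vec p) θ = ContinuousLinearMap.id ℝ (Vec p) from fderiv_id]
        rw [pow_zero]
        exact ContinuousLinearMap.norm_id_le
      · intro x y
        rw [Function.iterate_zero, pow_zero, one_mul]
        exact le_rfl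
      · intro x y
        rw [Function.iterate_zero,
          show fderiv ℝ (id : Vec p → Vec p) x = ContinuousLinearMap.id ℝ (Vec p) from fderiv_id,
          show fderiv ℝ (id : Vec p → Vec p) y = ContinuousLinearMap.id ℝ (Vec p) from fderiv_id,
          sub_self, norm_zero, Nat.mul_zero, pow_zero, sub_self, mul_zero, zero_mul]
  | succ n ih =>
      obtain ⟨hd, hb, hlip, hdlip⟩ := ih
      have hiter : f^[n + 1] = f ∘ f^[n] := Function.iterate_succ' f n
      have hd1 : Differentiable ℝ (f^[n + 1]) := by rw [hiter]; exact hfd.comp hd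
      have hcomp : ∀ θ, fderiv ℝ (f^[n + 1]) θ
          = (fderiv ℝ f (f^[n] θ)).comp (fderiv ℝ (f^[n]) θ) := by
        intro θ
        rw [hiter]
        exact fderiv_comp θ (hfd _) (hd θ)
      have hpow1 : (1 : ℝ) ≤ B ^ n := one_le_pow₀ hB
      have hpow2 : (1 : ℝ) ≤ B ^ (2 * n) := one_le_pow₀ hB
      have hpown : (0 : ℝ) ≤ B ^ n := by linarith
      refine ⟨hd1, ?_, ?_, ?_⟩
      · intro θ
        rw [hcomp]
        calc ‖(fderiv ℝ f (f^[n] θ)).comp (fderiv ℝ (f^[n]) θ)‖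
            ≤ ‖fderiv ℝ f (f^[n] θ)‖ * ‖fderiv ℝ (f^[n]) θ‖ :=
              ContinuousLinearMap.opNorm_comp_le _ _
          _ ≤ B * B ^ n := mul_le_mul (hfnorm _) (hb θ) (norm_nonneg _) hB0
          _ = B ^ (n + 1) := by rw [pow_succ]; ring
      · intro x y
        rw [hiter]
        simp only [Function.comp_apply]
        calc ‖f (f^[n] x) - f (f^[n] y)‖ ≤ B * ‖f^[n] x - f^[n] y‖ := hfLip _ _
          _ ≤ B * (B ^ n * ‖x - y‖) := mul_le_mul_of_nonneg_left (hlip x y) hB0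
          _ = B ^ (n + 1) * ‖x - y‖ := by rw [pow_succ]; ring
      · intro x y
        rw [hcomp, hcomp]
        set Ax := fderiv ℝ f (f^[n] x)
        set Ay := fderiv ℝ f (f^[n] y)
        set Jx := fderiv ℝ (f^[n]) x
        set Jy := fderiv ℝ (f^[n]) y
        have key : Ax.comp Jx - Ay.comp Jy
            = Ax.comp (Jx - Jy) + (Ax - Ay).comp Jy := by
          rw [ContinuousLinearMap.comp_sub, ContinuousLinearMap.sub_comp]; abel
        have h1 : ‖Ax.comp (Jx - Jy)‖ ≤ B * (L₃ / L₂ * ((B ^ (2 * n)) - 1) * ‖x - y‖) :=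
          le_trans (ContinuousLinearMap.opNorm_comp_le _ _)
            (mul_le_mul (hfnorm _) (hdlip x y) (norm_nonneg _) hB0)
        have h2 : ‖(Ax - Ay).comp Jy‖ ≤ α * L₃ * (B ^ n * ‖x - y‖) * B ^ n := by
          refine le_trans (ContinuousLinearMap.opNorm_comp_le _ _) ?_
          have hAxy : ‖Ax - Ay‖ ≤ α * L₃ * (B ^ n * ‖x - y‖) :=
            le_trans (hfdLip _ _)
              (mul_le_mul_of_nonneg_left (hlip x y) (by positivity))
          exact mul_le_mul hAxy (hb y) (norm_nonneg _) (by positivity)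
        have hscalar : B * (L₃ / L₂ * ((B ^ (2 * n)) - 1) * ‖x - y‖)
            + α * L₃ * (B ^ n * ‖x - y‖) * B ^ n
            ≤ L₃ / L₂ * ((B ^ (2 * (n + 1))) - 1) * ‖x - y‖ := by
          have hxx : B ^ (2 * (n + 1)) = B ^ (2 * n) * B ^ 2 := by
            rw [show 2 * (n + 1) = 2 * n + 2 by ring, pow_add]
          have hnn : B ^ n * B ^ n = B ^ (2 * n) := by
            rw [two_mul, pow_add]
          have hαL₃ : α * L₃ = L₃ / L₂ * (B - 1) := by
            rw [hBdef]; field_simp; ring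
          rw [hxx]
          have hΔ : (0 : ℝ) ≤ ‖x - y‖ := norm_nonneg _
          have hkey : B * (L₃ / L₂ * ((B ^ (2 * n)) - 1))
              + L₃ / L₂ * (B - 1) * B ^ (2 * n)
              ≤ L₃ / L₂ * ((B ^ (2 * n) * B ^ 2) - 1) := by
            have hc : (0 : ℝ) ≤ L₃ / L₂ := by positivity
            nlinarith [mul_nonneg hc (mul_nonneg (sq_nonneg (B - 1)) (by linarith : (0:ℝ) ≤ B ^ (2*n) )), sq_nonneg (B-1)]
          calc B * (L₃ / L₂ * ((B ^ (2 * n)) - 1) * ‖x - y‖)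
              + α * L₃ * (B ^ n * ‖x - y‖) * B ^ n
              = (B * (L₃ / L₂ * ((B ^ (2 * n)) - 1))
                  + L₃ / L₂ * (B - 1) * B ^ (2 * n)) * ‖x - y‖ := by
                rw [hαL₃, ← hnn]; ring
            _ ≤ L₃ / L₂ * ((B ^ (2 * n) * B ^ 2) - 1) * ‖x - y‖ :=
                mul_le_mul_of_nonneg_right hkey hΔ
        calc ‖Ax.comp Jx - Ay.comp Jy‖ = ‖Ax.comp (Jx - Jy) + (Ax - Ay).comp Jy‖ := by
              rw [key]
          _ ≤ ‖Ax.comp (Jx - Jy)‖ + ‖(Ax - Ay).comp Jy‖ := norm_add_le _ _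
          _ ≤ _ := by refine le_trans (add_le_add h1 h2) hscalar


end AuxLemmas

theorem outer_gradient_lipschitz_fixed_task
    (p r : ℕ) (α : ℝ) (hα : 0 < α)
    (Ωt : Type*) [Nonempty Ωt]
    (Lin Lout : Vec p → Ωt → ℝ) (L₁ L₂ L₃ : ℝ)
    (hA1 : Assumption1 p Lin Lout L₁ L₂ L₃)
    (T : Ωt) (θ' θ'' : Vec p) :
    ‖outerGrad p α r Lin Lout θ' T - outerGrad p α r Lin Lout θ'' T‖
      ≤ (L₂ * (1 + α * L₂) ^ (2 * r)
          + (L₁ * L₃ / L₂) * ((1 + α * L₂) ^ (2 * r) - 1)) * ‖θ' - θ''‖ := by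
  obtain ⟨hL₁, hL₂, hL₃, hA⟩ := hA1
  obtain ⟨hLinD, hGinD, hLoutD, hGoutD, hgradb, hHinb, hHoutb, hHinLip⟩ := hA T
  have hgd : gdStep p α Lin T = fun φ : Vec p => φ - α • gradient (fun ψ => Lin ψ T) φ := rfl
  obtain ⟨hd, hb, hlip, hdlip⟩ :=
    iter_bounds α L₂ L₃ hα hL₂ hL₃.le (gradient (fun ψ => Lin ψ T)) hGinD hHinb
      (fun φ ψ => hHinLip φ ψ) r
  rw [← hgd] at hd hb hlip hdlip
  set F : Vec p → Vec p := gdStep p α Lin T with hF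
  set B : ℝ := 1 + α * L₂ with hBdef
  have hB : 1 ≤ B := by have := mul_pos hα hL₂; simp only [hBdef]; linarith
  have hB0 : 0 ≤ B := by linarith
  have hpow : (0 : ℝ) ≤ B ^ r := by positivity
  set g : Vec p → ℝ := fun θ => Lout (F^[r] θ) T with hg
  have houter : ∀ θ, outerGrad p α r Lin Lout θ T = gradient g θ := fun θ => rfl
  rw [houter, houter, grad_sub_norm_eq]
  have hcomp : ∀ θ, fderiv ℝ g θ
      = (fderiv ℝ (fun φ => Lout φ T) (F^[r] θ)).comp (fderiv ℝ (F^[r]) θ) := by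
    intro θ
    exact fderiv_comp θ (hLoutD _) (hd θ)
  have hfout_norm : ∀ φ, ‖fderiv ℝ (fun φ => Lout φ T) φ‖ ≤ L₁ := by
    intro φ; rw [fderiv_norm_eq_grad]; exact hgradb φ
  have hfoutLip : ∀ x y, ‖fderiv ℝ (fun φ => Lout φ T) x - fderiv ℝ (fun φ => Lout φ T) y‖
      ≤ L₂ * ‖x - y‖ := by
    intro x y
    rw [← grad_sub_norm_eq]
    exact lip_of_fderiv_bound hGoutD hHoutb x y
  rw [hcomp, hcomp]
  set A1 := fderiv ℝ (fun φ => Lout φ T) (F^[r] θ')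
  set A2 := fderiv ℝ (fun φ => Lout φ T) (F^[r] θ'')
  set J1 := fderiv ℝ (F^[r]) θ'
  set J2 := fderiv ℝ (F^[r]) θ''
  have key : A1.comp J1 - A2.comp J2 = A1.comp (J1 - J2) + (A1 - A2).comp J2 := by
    rw [ContinuousLinearMap.comp_sub, ContinuousLinearMap.sub_comp]; abel
  have h1 : ‖A1.comp (J1 - J2)‖ ≤ L₁ * (L₃ / L₂ * ((B ^ (2 * r)) - 1) * ‖θ' - θ''‖) :=
    le_trans (ContinuousLinearMap.opNorm_comp_le _ _)
      (mul_le_mul (hfout_norm _) (hdlip θ' θ'') (norm_nonneg _) hL₁.le)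
  have h2 : ‖(A1 - A2).comp J2‖ ≤ L₂ * (B ^ r * ‖θ' - θ''‖) * B ^ r := by
    refine le_trans (ContinuousLinearMap.opNorm_comp_le _ _) ?_
    have hA12 : ‖A1 - A2‖ ≤ L₂ * (B ^ r * ‖θ' - θ''‖) :=
      le_trans (hfoutLip _ _) (mul_le_mul_of_nonneg_left (hlip θ' θ'') hL₂.le)
    exact mul_le_mul hA12 (hb θ'') (norm_nonneg _) (by positivity)
  have hfinal : L₁ * (L₃ / L₂ * ((B ^ (2 * r)) - 1) * ‖θ' - θ''‖)
      + L₂ * (B ^ r * ‖θ' - θ''‖) * B ^ r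
      = (L₂ * B ^ (2 * r) + L₁ * L₃ / L₂ * (B ^ (2 * r) - 1)) * ‖θ' - θ''‖ := by
    have hrr : B ^ (2 * r) = B ^ r * B ^ r := by rw [two_mul, pow_add]
    rw [hrr]; ring
  calc ‖A1.comp J1 - A2.comp J2‖
      = ‖A1.comp (J1 - J2) + (A1 - A2).comp J2‖ := by rw [key]
    _ ≤ ‖A1.comp (J1 - J2)‖ + ‖(A1 - A2).comp J2‖ := norm_add_le _ _
    _ ≤ L₁ * (L₃ / L₂ * ((B ^ (2 * r)) - 1) * ‖θ' - θ''‖)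
        + L₂ * (B ^ r * ‖θ' - θ''‖) * B ^ r := add_le_add h1 h2
    _ = _ := hfinal
end
end

section
/- Fix a task T ∈ Ω_T. Then for every θ ∈ ℝ^p, ‖∇_θ L^out(U(θ,T),T)‖₂ ≤ (1 + αL₂)^r L₁, where ∇_θ L^out(U(θ,T),T) denotes the gradient of the map θ ↦ L^out(U(θ,T),T). -/
open MeasureTheory ProbabilityTheory Filter Asymptotics

noncomputable section

/-!
STATEMENT 4: for a fixed task `T`, the outer gradient is uniformly bounded:
`‖∇_θ L^out(U(θ,T),T)‖ ≤ (1 + αL₂)^r L₁`.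
-/



lemma norm_gradient_eq (p : ℕ) (f : Vec p → ℝ) (x : Vec p) :
    ‖gradient f x‖ = ‖fderiv ℝ f x‖ := by
  unfold gradient
  exact (InnerProductSpace.toDual ℝ (Vec p)).symm.norm_map _

lemma iterate_fderiv_bound (p : ℕ) (F : Vec p → Vec p) (C : ℝ) (hC : 0 ≤ C)
    (hF : Differentiable ℝ F) (hFb : ∀ x, ‖fderiv ℝ F x‖ ≤ C) (n : ℕ) (θ : Vec p) :
    DifferentiableAt ℝ (F^[n]) θ ∧ ‖fderiv ℝ (F^[n]) θ‖ ≤ C ^ n := by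
  induction n with
  | zero =>
    simp only [Function.iterate_zero, pow_zero]
    refine ⟨differentiableAt_id, ?_⟩
    rw [fderiv_id]
    exact ContinuousLinearMap.norm_id_le
  | succ n ih =>
    obtain ⟨hd, hb⟩ := ih
    have hcomp : F^[n+1] = F ∘ F^[n] := Function.iterate_succ' F n
    have hd2 : DifferentiableAt ℝ (F ∘ F^[n]) θ := (hF _).comp θ hd
    constructor
    · rw [hcomp]; exact hd2
    · have : fderiv ℝ (F^[n+1]) θ = (fderiv ℝ F (F^[n] θ)).comp (fderiv ℝ (F^[n]) θ) := by
        rw [hcomp]; exact fderiv_comp θ (hF _) hd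
      rw [this, pow_succ']
      exact le_trans (ContinuousLinearMap.opNorm_comp_le _ _)
        (mul_le_mul (hFb _) hb (norm_nonneg _) hC)

lemma gdStep_fderiv_bound (p : ℕ) (α : ℝ) (hα : 0 < α) {Ωt : Type*}
    (Lin : Vec p → Ωt → ℝ) (T : Ωt) (L₂ : ℝ)
    (hg : Differentiable ℝ (gradient (fun φ => Lin φ T)))
    (hb : ∀ φ, ‖fderiv ℝ (gradient (fun ψ => Lin ψ T)) φ‖ ≤ L₂) :
    Differentiable ℝ (gdStep p α Lin T) ∧
      ∀ φ, ‖fderiv ℝ (gdStep p α Lin T) φ‖ ≤ 1 + α * L₂ := by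
  set g := gradient (fun φ => Lin φ T) with hgdef
  have hdiff : Differentiable ℝ (gdStep p α Lin T) := fun φ =>
    differentiableAt_fun_id.sub ((hg φ).const_smul α)
  refine ⟨hdiff, fun φ => ?_⟩
  have hfd : fderiv ℝ (gdStep p α Lin T) φ
      = ContinuousLinearMap.id ℝ (Vec p) - α • fderiv ℝ g φ := by
    have : fderiv ℝ (fun φ => φ - α • g φ) φ
        = fderiv ℝ (fun φ : Vec p => φ) φ - fderiv ℝ (fun φ => α • g φ) φ :=
      fderiv_fun_sub differentiableAt_fun_id ((hg φ).const_smul α)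
    rw [show gdStep p α Lin T = fun φ => φ - α • g φ from rfl, this,
      fderiv_fun_const_smul (hg φ) α, fderiv_id']
  rw [hfd]
  calc ‖ContinuousLinearMap.id ℝ (Vec p) - α • fderiv ℝ g φ‖
      ≤ ‖ContinuousLinearMap.id ℝ (Vec p)‖ + ‖α • fderiv ℝ g φ‖ := norm_sub_le _ _
    _ ≤ 1 + α * L₂ := by
        gcongr
        · exact ContinuousLinearMap.norm_id_le
        · rw [norm_smul, Real.norm_eq_abs, abs_of_pos hα]
          exact mul_le_mul_of_nonneg_left (hb φ) hα.le

theorem outer_gradient_bound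
    (p r : ℕ) (α : ℝ) (hα : 0 < α)
    (Ωt : Type*) [Nonempty Ωt]
    (Lin Lout : Vec p → Ωt → ℝ) (L₁ L₂ L₃ : ℝ)
    (hA1 : Assumption1 p Lin Lout L₁ L₂ L₃)
    (T : Ωt) (θ : Vec p) :
    ‖outerGrad p α r Lin Lout θ T‖ ≤ (1 + α * L₂) ^ r * L₁ := by
  obtain ⟨hL₁, hL₂, hL₃, hT⟩ := hA1
  obtain ⟨hin, hing, hout, houtg, hgb, hinH, houtH, hlip⟩ := hT T
  obtain ⟨hstep, hstepb⟩ := gdStep_fderiv_bound p α hα Lin T L₂ hing hinH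
  have hC : (0:ℝ) ≤ 1 + α * L₂ := by positivity
  obtain ⟨hUd, hUb⟩ := iterate_fderiv_bound p (gdStep p α Lin T) (1 + α * L₂) hC hstep hstepb r θ
  have hUd' : DifferentiableAt ℝ (fun θ' => U p α r Lin θ' T) θ := hUd
  have hcomp : fderiv ℝ (fun θ' => Lout (U p α r Lin θ' T) T) θ
      = (fderiv ℝ (fun φ => Lout φ T) (U p α r Lin θ T)).comp
          (fderiv ℝ (fun θ' => U p α r Lin θ' T) θ) :=
    fderiv_comp θ (hout _) hUd'
  have h1 : ‖fderiv ℝ (fun φ => Lout φ T) (U p α r Lin θ T)‖ ≤ L₁ := by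
    rw [← norm_gradient_eq]; exact hgb _
  rw [outerGrad, norm_gradient_eq, hcomp, mul_comm]
  exact le_trans (ContinuousLinearMap.opNorm_comp_le _ _)
    (mul_le_mul h1 hUb (norm_nonneg _) hL₁.le)
end
end

section
/- For every θ ∈ ℝ^p, every T ∈ Ω_T and every x ∈ {0,1}, ‖G(θ, T, x)‖₂ ≤ (1 + q^{−1}((1 + αL₂)^r − 1)) L₁. -/
open MeasureTheory ProbabilityTheory Filter Asymptotics

noncomputable section

/-!
STATEMENT 6: pointwise bound on the UFO-BLO estimator:
`‖G(θ,T,x)‖ ≤ (1 + q⁻¹((1+αL₂)^r − 1)) L₁` for every `θ`, `T` and `x ∈ {0,1}`.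
-/

lemma norm_gradient_eq_norm_fderiv (f : Vec p → ℝ) (x : Vec p) :
    ‖gradient f x‖ = ‖fderiv ℝ f x‖ := by
  rw [gradient]
  exact LinearIsometryEquiv.norm_map _ _

lemma gdStep_hasFDerivAt {p : ℕ} {α : ℝ} {Ωt : Type*} {Lin : Vec p → Ωt → ℝ} {T : Ωt}
    (hG : Differentiable ℝ (gradient (fun φ => Lin φ T))) (ψ : Vec p) :
    HasFDerivAt (gdStep p α Lin T)
      (ContinuousLinearMap.id ℝ (Vec p) - α • fderiv ℝ (gradient (fun φ => Lin φ T)) ψ) ψ := by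
  exact (hasFDerivAt_id ψ).sub ((hG ψ).hasFDerivAt.const_smul α)

/-- Key induction: the derivative of the `n`-fold iterate of `gdStep` exists and is within
`(1+αL₂)^n - 1` of the identity. -/
lemma iterate_fderiv_bound_s6 {p : ℕ} {α : ℝ} (hα : 0 < α) {Ωt : Type*}
    {Lin : Vec p → Ωt → ℝ} {T : Ωt} {L₂ : ℝ} (hL₂ : 0 < L₂)
    (hG : Differentiable ℝ (gradient (fun φ => Lin φ T)))
    (hHess : ∀ φ, ‖fderiv ℝ (gradient (fun ψ => Lin ψ T)) φ‖ ≤ L₂)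
    (n : ℕ) (θ : Vec p) :
    DifferentiableAt ℝ (fun θ' => (gdStep p α Lin T)^[n] θ') θ ∧
    ‖fderiv ℝ (fun θ' => (gdStep p α Lin T)^[n] θ') θ
        - ContinuousLinearMap.id ℝ (Vec p)‖ ≤ (1 + α * L₂) ^ n - 1 := by
  induction n with
  | zero =>
      simp only [Function.iterate_zero, id_eq, pow_zero]
      refine ⟨differentiableAt_fun_id, ?_⟩
      rw [fderiv_id', sub_self, norm_zero]; norm_num
  | succ n ih =>
      have hstep := gdStep_hasFDerivAt (α := α) hG ((gdStep p α Lin T)^[n] θ)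
      have hiter : (fun θ' => (gdStep p α Lin T)^[n+1] θ')
          = (gdStep p α Lin T) ∘ (fun θ' => (gdStep p α Lin T)^[n] θ') := by
        funext θ'; rw [Function.iterate_succ_apply']; rfl
      have hdiff : DifferentiableAt ℝ (fun θ' => (gdStep p α Lin T)^[n+1] θ') θ := by
        rw [hiter]
        exact hstep.differentiableAt.comp θ ih.1
      refine ⟨hdiff, ?_⟩
      have hfd : fderiv ℝ (fun θ' => (gdStep p α Lin T)^[n+1] θ') θ
          = (ContinuousLinearMap.id ℝ (Vec p)
              - α • fderiv ℝ (gradient (fun φ => Lin φ T)) ((gdStep p α Lin T)^[n] θ)).comp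
            (fderiv ℝ (fun θ' => (gdStep p α Lin T)^[n] θ') θ) := by
        rw [hiter]
        rw [fderiv_comp θ hstep.differentiableAt ih.1, hstep.fderiv]
      set A := ContinuousLinearMap.id ℝ (Vec p)
        - α • fderiv ℝ (gradient (fun φ => Lin φ T)) ((gdStep p α Lin T)^[n] θ) with hA
      set B := fderiv ℝ (fun θ' => (gdStep p α Lin T)^[n] θ') θ with hB
      have hAI : ‖A - ContinuousLinearMap.id ℝ (Vec p)‖ ≤ α * L₂ := by
        have : A - ContinuousLinearMap.id ℝ (Vec p)
            = -(α • fderiv ℝ (gradient (fun φ => Lin φ T)) ((gdStep p α Lin T)^[n] θ)) := by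
          rw [hA]; abel
        rw [this, norm_neg]
        calc ‖α • fderiv ℝ (gradient (fun φ => Lin φ T)) ((gdStep p α Lin T)^[n] θ)‖
            ≤ ‖α‖ * ‖fderiv ℝ (gradient (fun φ => Lin φ T)) ((gdStep p α Lin T)^[n] θ)‖ :=
              ContinuousLinearMap.opNorm_smul_le _ _
          _ ≤ α * L₂ := by
              rw [Real.norm_eq_abs, abs_of_pos hα]
              exact mul_le_mul_of_nonneg_left (hHess _) hα.le
      have hAnorm : ‖A‖ ≤ 1 + α * L₂ := by
        calc ‖A‖ = ‖ContinuousLinearMap.id ℝ (Vec p) + (A - ContinuousLinearMap.id ℝ (Vec p))‖ := by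
              congr 1; abel
          _ ≤ ‖ContinuousLinearMap.id ℝ (Vec p)‖ + ‖A - ContinuousLinearMap.id ℝ (Vec p)‖ :=
              norm_add_le _ _
          _ ≤ 1 + α * L₂ := add_le_add (ContinuousLinearMap.norm_id_le) hAI
      have hdecomp : A.comp B - ContinuousLinearMap.id ℝ (Vec p)
          = A.comp (B - ContinuousLinearMap.id ℝ (Vec p))
            + (A - ContinuousLinearMap.id ℝ (Vec p)) := by
        ext v
        simp [ContinuousLinearMap.comp_apply, ContinuousLinearMap.sub_apply,
          ContinuousLinearMap.add_apply, map_sub]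
      rw [hfd, hdecomp]
      calc ‖A.comp (B - ContinuousLinearMap.id ℝ (Vec p))
              + (A - ContinuousLinearMap.id ℝ (Vec p))‖
          ≤ ‖A.comp (B - ContinuousLinearMap.id ℝ (Vec p))‖
            + ‖A - ContinuousLinearMap.id ℝ (Vec p)‖ := norm_add_le _ _
        _ ≤ ‖A‖ * ‖B - ContinuousLinearMap.id ℝ (Vec p)‖ + α * L₂ :=
            add_le_add (ContinuousLinearMap.opNorm_comp_le _ _) hAI
        _ ≤ (1 + α * L₂) * ((1 + α * L₂) ^ n - 1) + α * L₂ := by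
            have h1 : (0:ℝ) ≤ ‖B - ContinuousLinearMap.id ℝ (Vec p)‖ := norm_nonneg _
            have h2 : (0:ℝ) ≤ 1 + α * L₂ := by positivity
            exact add_le_add_left (mul_le_mul hAnorm ih.2 h1 h2) _
        _ = (1 + α * L₂) ^ (n + 1) - 1 := by ring

theorem ufo_blo_estimator_bound
    (p r : ℕ) (α : ℝ) (hα : 0 < α)
    (Ωt : Type*) [Nonempty Ωt]
    (Lin Lout : Vec p → Ωt → ℝ) (L₁ L₂ L₃ : ℝ)
    (hA1 : Assumption1 p Lin Lout L₁ L₂ L₃)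
    (q : ℝ) (hq : q ∈ Set.Ioc (0 : ℝ) 1) :
    ∀ (θ : Vec p) (T : Ωt) (x : ℝ), x = 0 ∨ x = 1 →
      ‖Gest p α r q Lin Lout θ T x‖
        ≤ (1 + q⁻¹ * ((1 + α * L₂) ^ r - 1)) * L₁ := by
  obtain ⟨hL₁, hL₂, hL₃, hT⟩ := hA1
  intro θ T x hx
  obtain ⟨hLinD, hGLinD, hLoutD, hGLoutD, hGLoutBd, hHessIn, hHessOut, hLip⟩ := hT T
  obtain ⟨hq0, hq1⟩ := hq
  set φr := U p α r Lin θ T with hφr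
  set g := gradient (fun φ => Lout φ T) φr with hg
  set og := outerGrad p α r Lin Lout θ T with hog
  have hgbd : ‖g‖ ≤ L₁ := hGLoutBd φr
  have hpow1 : (1:ℝ) ≤ (1 + α * L₂) ^ r := one_le_pow₀ (by nlinarith)
  -- bound on `og - g`
  obtain ⟨hUdiff, hUbd⟩ := iterate_fderiv_bound_s6 hα hL₂ hGLinD hHessIn r θ
  have hUeq : (fun θ' => U p α r Lin θ' T) = fun θ' => (gdStep p α Lin T)^[r] θ' := rfl
  set DU := fderiv ℝ (fun θ' => (gdStep p α Lin T)^[r] θ') θ with hDU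
  set ℓ := fderiv ℝ (fun φ => Lout φ T) φr with hℓ
  have hℓbd : ‖ℓ‖ ≤ L₁ := by
    rw [← norm_gradient_eq_norm_fderiv]; exact hGLoutBd φr
  have hcompfd : fderiv ℝ (fun θ' => Lout (U p α r Lin θ' T) T) θ = ℓ.comp DU := by
    have : (fun θ' => Lout (U p α r Lin θ' T) T)
        = (fun φ => Lout φ T) ∘ (fun θ' => (gdStep p α Lin T)^[r] θ') := rfl
    rw [this, fderiv_comp θ (hLoutD _) hUdiff]
    rfl
  have hdiffbd : ‖og - g‖ ≤ ((1 + α * L₂) ^ r - 1) * L₁ := by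
    have hogg : og - g
        = (InnerProductSpace.toDual ℝ (Vec p)).symm
            (ℓ.comp (DU - ContinuousLinearMap.id ℝ (Vec p))) := by
      rw [hog, hg, outerGrad, gradient, gradient, hcompfd, ← map_sub]
      congr 1
      ext v
      show ℓ (DU v) - ℓ v = ℓ (DU v - v)
      rw [map_sub]
    rw [hogg, LinearIsometryEquiv.norm_map]
    calc ‖ℓ.comp (DU - ContinuousLinearMap.id ℝ (Vec p))‖
        ≤ ‖ℓ‖ * ‖DU - ContinuousLinearMap.id ℝ (Vec p)‖ := ContinuousLinearMap.opNorm_comp_le _ _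
      _ ≤ L₁ * ((1 + α * L₂) ^ r - 1) :=
          mul_le_mul hℓbd hUbd (norm_nonneg _) hL₁.le
      _ = ((1 + α * L₂) ^ r - 1) * L₁ := mul_comm _ _
  have hqinv : (0:ℝ) < q⁻¹ := inv_pos.mpr hq0
  rcases hx with hx | hx
  · subst hx
    have h0 : Gest p α r q Lin Lout θ T 0 = g := by
      unfold Gest
      rw [zero_div, zero_smul, add_zero]
    rw [h0]
    have hge : (0:ℝ) ≤ q⁻¹ * ((1 + α * L₂) ^ r - 1) :=
      mul_nonneg hqinv.le (by linarith)
    calc ‖g‖ ≤ L₁ := hgbd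
      _ = 1 * L₁ := (one_mul L₁).symm
      _ ≤ (1 + q⁻¹ * ((1 + α * L₂) ^ r - 1)) * L₁ :=
          mul_le_mul_of_nonneg_right (by linarith) hL₁.le
  · subst hx
    have hGeq : Gest p α r q Lin Lout θ T 1 = g + q⁻¹ • (og - g) := by
      unfold Gest
      rw [one_div]
    rw [hGeq]
    calc ‖g + q⁻¹ • (og - g)‖ ≤ ‖g‖ + ‖q⁻¹ • (og - g)‖ := norm_add_le _ _
      _ = ‖g‖ + q⁻¹ * ‖og - g‖ := by
          rw [norm_smul, Real.norm_eq_abs, abs_of_pos hqinv]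
      _ ≤ L₁ + q⁻¹ * (((1 + α * L₂) ^ r - 1) * L₁) :=
          add_le_add hgbd (mul_le_mul_of_nonneg_left hdiffbd hqinv.le)
      _ = (1 + q⁻¹ * ((1 + α * L₂) ^ r - 1)) * L₁ := by ring
end
end

section
/- Let ξ ∼ Bernoulli(q) be independent of T ∼ p(T). Then for every θ ∈ ℝ^p, E_{ξ, p(T)}[‖G(θ, T, ξ)‖₂²] ≤ (1 + q^{−1}((1 + αL₂)^r − 1))² L₁². -/
open MeasureTheory ProbabilityTheory Filter Asymptotics

noncomputable section

/-!
STATEMENT 7 (second moment bound, Lemma 2 of the paper): if `ξ ∼ Bernoulli(q)`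
is independent of `T ∼ p(T)` (formalized via the product measure
`μ.prod (bern q)`), then `E_{ξ,p(T)}[‖G(θ,T,ξ)‖²] ≤ (1 + q⁻¹((1+αL₂)^r − 1))² L₁²`.
-/


-- general iterate fderiv bound
lemma iter_fderiv_bound {E : Type*} [NormedAddCommGroup E] [NormedSpace ℝ E]
    (s : E → E) (hs : Differentiable ℝ s) (c : ℝ) (hc : 0 ≤ c)
    (hb : ∀ x, ‖fderiv ℝ s x - ContinuousLinearMap.id ℝ E‖ ≤ c) (n : ℕ) (x : E) :
    ‖fderiv ℝ (s^[n]) x - ContinuousLinearMap.id ℝ E‖ ≤ (1 + c) ^ n - 1 := by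
  induction n generalizing x with
  | zero => simp [Function.iterate_zero, fderiv_id']
  | succ n ih =>
    have hdit : Differentiable ℝ (s^[n]) := hs.iterate n
    have hcomp : fderiv ℝ (s^[n+1]) x = (fderiv ℝ s (s^[n] x)).comp (fderiv ℝ (s^[n]) x) := by
      rw [Function.iterate_succ']
      exact fderiv_comp x (hs _) (hdit x)
    set A := fderiv ℝ s (s^[n] x)
    set B := fderiv ℝ (s^[n]) x
    have hBn : ‖B‖ ≤ (1 + c) ^ n := by
      calc ‖B‖ ≤ ‖B - ContinuousLinearMap.id ℝ E‖ + ‖(ContinuousLinearMap.id ℝ E)‖ := by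
            simpa using norm_add_le (B - ContinuousLinearMap.id ℝ E) (ContinuousLinearMap.id ℝ E)
        _ ≤ ((1 + c) ^ n - 1) + 1 := add_le_add (ih x) ContinuousLinearMap.norm_id_le
        _ = (1 + c) ^ n := by ring
    have key : A.comp B - ContinuousLinearMap.id ℝ E
        = (A - ContinuousLinearMap.id ℝ E).comp B + (B - ContinuousLinearMap.id ℝ E) := by
      ext v; simp
    rw [hcomp, key]
    have h1 : ‖(A - ContinuousLinearMap.id ℝ E).comp B‖ ≤ c * (1 + c) ^ n := by
      calc ‖(A - ContinuousLinearMap.id ℝ E).comp B‖ ≤ ‖A - ContinuousLinearMap.id ℝ E‖ * ‖B‖ :=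
            ContinuousLinearMap.opNorm_comp_le _ _
        _ ≤ c * (1 + c) ^ n := by
            apply mul_le_mul (hb _) hBn (norm_nonneg _) hc
    calc ‖(A - ContinuousLinearMap.id ℝ E).comp B + (B - ContinuousLinearMap.id ℝ E)‖
        ≤ c * (1 + c) ^ n + ((1 + c) ^ n - 1) := (norm_add_le _ _).trans (add_le_add h1 (ih x))
      _ = (1 + c) ^ (n+1) - 1 := by ring

lemma bern_prob {q : ℝ} (hq : q ∈ Set.Ioc (0:ℝ) 1) : IsProbabilityMeasure (bern q) := by
  constructor
  have h1 : (0:ℝ) ≤ q := hq.1.le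
  have h2 : (0:ℝ) ≤ 1 - q := by linarith [hq.2]
  simp only [bern, Measure.add_apply, Measure.smul_apply, smul_eq_mul,
    Measure.dirac_apply' _ MeasurableSet.univ, Set.indicator_univ, Pi.one_apply, mul_one]
  rw [← ENNReal.ofReal_add h1 h2]
  norm_num

theorem ufo_blo_second_moment_bound
    (p r : ℕ) (α : ℝ) (hα : 0 < α)
    (Ωt : Type*) [Nonempty Ωt] [MeasurableSpace Ωt]
    (μ : Measure Ωt) [IsProbabilityMeasure μ]
    (Lin Lout : Vec p → Ωt → ℝ) (L₁ L₂ L₃ : ℝ)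
    (hA1 : Assumption1 p Lin Lout L₁ L₂ L₃)
    (q : ℝ) (hq : q ∈ Set.Ioc (0 : ℝ) 1)
    (θ : Vec p) :
    (∫ z : Ωt × Bool,
        ‖Gest p α r q Lin Lout θ z.1 (if z.2 then 1 else 0)‖ ^ 2 ∂(μ.prod (bern q)))
      ≤ (1 + q⁻¹ * ((1 + α * L₂) ^ r - 1)) ^ 2 * L₁ ^ 2 := by
  obtain ⟨hL₁, hL₂, hL₃, hT⟩ := hA1
  have hq0 : 0 < q := hq.1
  have hs1 : 1 ≤ (1 + α * L₂) ^ r := one_le_pow₀ (by nlinarith)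
  have hqpos : (0:ℝ) ≤ q⁻¹ * ((1 + α * L₂) ^ r - 1) :=
    mul_nonneg (by positivity) (by linarith)
  have hC1 : 1 ≤ (1 + q⁻¹ * ((1 + α * L₂) ^ r - 1)) := by linarith
  have hCL : 0 ≤ (1 + q⁻¹ * ((1 + α * L₂) ^ r - 1)) * L₁ := mul_nonneg (by linarith) hL₁.le
  -- pointwise bound on the estimator norm
  have hpoint : ∀ (T : Ωt) (b : Bool),
      ‖Gest p α r q Lin Lout θ T (if b then 1 else 0)‖ ^ 2 ≤ (1 + q⁻¹ * ((1 + α * L₂) ^ r - 1)) ^ 2 * L₁ ^ 2 := by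
    intro T b
    obtain ⟨hLinD, hGinD, hLoutD, hGoutD, hgb, hHin, hHout, _⟩ := hT T
    -- the inner map is differentiable with derivative close to the identity
    have hstepD : Differentiable ℝ (gdStep p α Lin T) := by
      have h : (gdStep p α Lin T) = fun φ => φ - α • gradient (fun ψ => Lin ψ T) φ := rfl
      rw [h]
      exact differentiable_id.sub (hGinD.const_smul α)
    have hfd : ∀ φ, ‖fderiv ℝ (gdStep p α Lin T) φ - ContinuousLinearMap.id ℝ (Vec p)‖ ≤ α * L₂ := by
      intro φ
      have hG := (hGinD φ).hasFDerivAt.const_smul α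
      have hstep : HasFDerivAt (gdStep p α Lin T)
          (ContinuousLinearMap.id ℝ (Vec p) - α • fderiv ℝ (gradient (fun ψ => Lin ψ T)) φ) φ :=
        (hasFDerivAt_id φ).sub hG
      rw [hstep.fderiv]
      have h2 : ContinuousLinearMap.id ℝ (Vec p) - α • fderiv ℝ (gradient (fun ψ => Lin ψ T)) φ - ContinuousLinearMap.id ℝ (Vec p)
          = -(α • fderiv ℝ (gradient (fun ψ => Lin ψ T)) φ) := by abel
      rw [h2, norm_neg, norm_smul, Real.norm_eq_abs, abs_of_pos hα]
      exact mul_le_mul_of_nonneg_left (hHin φ) hα.le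
    have hDU : ‖fderiv ℝ ((gdStep p α Lin T)^[r]) θ - ContinuousLinearMap.id ℝ (Vec p)‖ ≤ (1 + α * L₂) ^ r - 1 := by
      have h := iter_fderiv_bound (gdStep p α Lin T) hstepD (α * L₂)
        (mul_nonneg hα.le hL₂.le) hfd r θ
      linarith
    -- bound on the gradient and the Fréchet derivative of L^out at U(θ,T)
    have hg : ‖gradient (fun φ => Lout φ T) (U p α r Lin θ T)‖ ≤ L₁ := hgb _
    have hgA : gradient (fun φ => Lout φ T) (U p α r Lin θ T) = (InnerProductSpace.toDual ℝ (Vec p)).symm (fderiv ℝ (fun φ => Lout φ T) (U p α r Lin θ T)) := rfl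
    have hAnorm : ‖fderiv ℝ (fun φ => Lout φ T) (U p α r Lin θ T)‖ ≤ L₁ := by
      have h := hgb (U p α r Lin θ T)
      rwa [hgA, LinearIsometryEquiv.norm_map] at h
    -- chain rule for the outer gradient
    have hUd : Differentiable ℝ ((gdStep p α Lin T)^[r]) := hstepD.iterate r
    have hfderiv_comp : fderiv ℝ (fun θ' => Lout (U p α r Lin θ' T) T) θ
        = (fderiv ℝ (fun φ => Lout φ T) (U p α r Lin θ T)).comp (fderiv ℝ ((gdStep p α Lin T)^[r]) θ) := by
      have h : (fun θ' => Lout (U p α r Lin θ' T) T)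
          = (fun φ => Lout φ T) ∘ ((gdStep p α Lin T)^[r]) := rfl
      rw [h]
      exact fderiv_comp θ (hLoutD _) (hUd θ)
    have hog : outerGrad p α r Lin Lout θ T = (InnerProductSpace.toDual ℝ (Vec p)).symm ((fderiv ℝ (fun φ => Lout φ T) (U p α r Lin θ T)).comp (fderiv ℝ ((gdStep p α Lin T)^[r]) θ)) := by
      rw [outerGrad, gradient, hfderiv_comp]
    have hdiff : ‖outerGrad p α r Lin Lout θ T - gradient (fun φ => Lout φ T) (U p α r Lin θ T)‖ ≤ ((1 + α * L₂) ^ r - 1) * L₁ := by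
      rw [hog, hgA, ← map_sub, LinearIsometryEquiv.norm_map]
      have hcs : (fderiv ℝ (fun φ => Lout φ T) (U p α r Lin θ T)).comp (fderiv ℝ ((gdStep p α Lin T)^[r]) θ) - (fderiv ℝ (fun φ => Lout φ T) (U p α r Lin θ T)) = (fderiv ℝ (fun φ => Lout φ T) (U p α r Lin θ T)).comp (fderiv ℝ ((gdStep p α Lin T)^[r]) θ - ContinuousLinearMap.id ℝ (Vec p)) := by
        ext v; simp
      rw [hcs]
      calc ‖(fderiv ℝ (fun φ => Lout φ T) (U p α r Lin θ T)).comp (fderiv ℝ ((gdStep p α Lin T)^[r]) θ - ContinuousLinearMap.id ℝ (Vec p))‖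
          ≤ ‖fderiv ℝ (fun φ => Lout φ T) (U p α r Lin θ T)‖ * ‖fderiv ℝ ((gdStep p α Lin T)^[r]) θ - ContinuousLinearMap.id ℝ (Vec p)‖ := ContinuousLinearMap.opNorm_comp_le _ _
        _ ≤ L₁ * ((1 + α * L₂) ^ r - 1) := mul_le_mul hAnorm hDU (norm_nonneg _) hL₁.le
        _ = ((1 + α * L₂) ^ r - 1) * L₁ := by ring
    -- bound on the estimator
    have hGest : ‖Gest p α r q Lin Lout θ T (if b then 1 else 0)‖ ≤ (1 + q⁻¹ * ((1 + α * L₂) ^ r - 1)) * L₁ := by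
      cases b with
      | false =>
        have h : Gest p α r q Lin Lout θ T (if false = true then 1 else 0) = gradient (fun φ => Lout φ T) (U p α r Lin θ T) := by
          simp [Gest]
        rw [h]
        nlinarith [hg]
      | true =>
        have h : Gest p α r q Lin Lout θ T (if true = true then 1 else 0)
            = gradient (fun φ => Lout φ T) (U p α r Lin θ T) + (1 / q) • (outerGrad p α r Lin Lout θ T - gradient (fun φ => Lout φ T) (U p α r Lin θ T)) := by
          simp [Gest]
        rw [h]
        calc ‖gradient (fun φ => Lout φ T) (U p α r Lin θ T) + (1 / q) • (outerGrad p α r Lin Lout θ T - gradient (fun φ => Lout φ T) (U p α r Lin θ T))‖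
            ≤ ‖gradient (fun φ => Lout φ T) (U p α r Lin θ T)‖ + ‖(1 / q) • (outerGrad p α r Lin Lout θ T - gradient (fun φ => Lout φ T) (U p α r Lin θ T))‖ := norm_add_le _ _
          _ = ‖gradient (fun φ => Lout φ T) (U p α r Lin θ T)‖ + q⁻¹ * ‖outerGrad p α r Lin Lout θ T - gradient (fun φ => Lout φ T) (U p α r Lin θ T)‖ := by
              rw [norm_smul, Real.norm_eq_abs, abs_of_pos (by positivity)]
              ring_nf
          _ ≤ L₁ + q⁻¹ * (((1 + α * L₂) ^ r - 1) * L₁) := by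
              have h3 := mul_le_mul_of_nonneg_left hdiff (by positivity : (0:ℝ) ≤ q⁻¹)
              linarith
          _ = (1 + q⁻¹ * ((1 + α * L₂) ^ r - 1)) * L₁ := by ring
    calc ‖Gest p α r q Lin Lout θ T (if b then 1 else 0)‖ ^ 2
        ≤ ((1 + q⁻¹ * ((1 + α * L₂) ^ r - 1)) * L₁) ^ 2 := pow_le_pow_left₀ (norm_nonneg _) hGest 2
      _ = (1 + q⁻¹ * ((1 + α * L₂) ^ r - 1)) ^ 2 * L₁ ^ 2 := by ring
  -- integrate the pointwise bound
  haveI : IsProbabilityMeasure (bern q) := bern_prob hq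
  have hK : (0:ℝ) ≤ (1 + q⁻¹ * ((1 + α * L₂) ^ r - 1)) ^ 2 * L₁ ^ 2 := by positivity
  by_cases hi : Integrable
      (fun z : Ωt × Bool => ‖Gest p α r q Lin Lout θ z.1 (if z.2 then 1 else 0)‖ ^ 2)
      (μ.prod (bern q))
  · calc (∫ z : Ωt × Bool,
          ‖Gest p α r q Lin Lout θ z.1 (if z.2 then 1 else 0)‖ ^ 2 ∂(μ.prod (bern q)))
        ≤ ∫ _ : Ωt × Bool, (1 + q⁻¹ * ((1 + α * L₂) ^ r - 1)) ^ 2 * L₁ ^ 2 ∂(μ.prod (bern q)) :=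
          integral_mono hi (integrable_const _) (fun z => hpoint z.1 z.2)
      _ = (1 + q⁻¹ * ((1 + α * L₂) ^ r - 1)) ^ 2 * L₁ ^ 2 := by simp
  · rw [integral_undef hi]
    exact hK
end
end

section
/- Let a > 0, A > 0, c ∈ ℝ, and define f : ℝ → ℝ by f(x) = (a/2)z² if z ≤ A; f(x) = −(a/6)(z−A)³ + (a/2)(z−A)² + aAz − (a/2)A² if A < z ≤ A+1; and f(x) = ((a/2)+aA)z − a/6 − (a/2)A² − (a/2)A if z > A+1, where z = |x − c|. Then f is twice differentiable on ℝ, its second derivative is f''(x) = a if z ≤ A, f''(x) = −az + a + aA if A < z ≤ A+1, and f''(x) = 0 if z > A+1; consequently 0 ≤ f''(x) ≤ a for all x (so f' is Lipschitz with constant a), f'' is Lipschitz with constant a, |f'(x)| ≤ a(1/2 + A) for all x ∈ ℝ, and f attains its global minimum at x = c. -/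
open Set Filter Topology

/-! Auxiliary definitions: the loss `FF`, its derivative `GG`, second derivative `HH`. -/

noncomputable def FF (a A t : ℝ) : ℝ :=
  if |t| ≤ A then a / 2 * t ^ 2
  else if |t| ≤ A + 1 then
    -(a / 6) * (|t| - A) ^ 3 + a / 2 * (|t| - A) ^ 2 + a * A * |t| - a / 2 * A ^ 2
  else (a / 2 + a * A) * |t| - a / 6 - a / 2 * A ^ 2 - a / 2 * A

noncomputable def GG (a A t : ℝ) : ℝ :=
  if |t| ≤ A then a * t
  else (if 0 ≤ t then 1 else -1) *
    (if |t| ≤ A + 1 then -(a / 2) * (|t| - A) ^ 2 + a * (|t| - A) + a * A else a / 2 + a * A)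

noncomputable def HH (a A t : ℝ) : ℝ :=
  if |t| ≤ A then a else if |t| ≤ A + 1 then -(a * |t|) + a + a * A else 0

/-- cubic piece -/
noncomputable def PP (a A s : ℝ) : ℝ :=
  -(a / 6) * (s - A) ^ 3 + a / 2 * (s - A) ^ 2 + a * A * s - a / 2 * A ^ 2

/-- derivative of cubic piece -/
noncomputable def QQ (a A s : ℝ) : ℝ :=
  -(a / 2) * (s - A) ^ 2 + a * (s - A) + a * A

/-- linear piece -/
noncomputable def LL (a A s : ℝ) : ℝ :=
  (a / 2 + a * A) * s - a / 6 - a / 2 * A ^ 2 - a / 2 * A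

lemma hasDerivAt_PP (a A t : ℝ) : HasDerivAt (fun s => PP a A s) (QQ a A t) t := by
  have h : HasDerivAt (fun s : ℝ => s - A) 1 t := (hasDerivAt_id t).sub_const A
  have h3 : HasDerivAt (fun s : ℝ => (s - A) ^ 3) (3 * (t - A) ^ 2) t := by
    simpa using h.fun_pow 3
  have h2 : HasDerivAt (fun s : ℝ => (s - A) ^ 2) (2 * (t - A)) t := by
    simpa using h.fun_pow 2
  have hid : HasDerivAt (fun s : ℝ => a * A * s) (a * A) t := by
    simpa using (hasDerivAt_id t).const_mul (a * A)
  have := (((h3.const_mul (-(a / 6))).add (h2.const_mul (a / 2))).add hid).sub_const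
    (a / 2 * A ^ 2)
  refine this.congr_deriv ?_
  simp [QQ]; ring

lemma hasDerivAt_QQ (a A t : ℝ) : HasDerivAt (fun s => QQ a A s) (a + a * A - a * t) t := by
  have h : HasDerivAt (fun s : ℝ => s - A) 1 t := (hasDerivAt_id t).sub_const A
  have h2 : HasDerivAt (fun s : ℝ => (s - A) ^ 2) (2 * (t - A)) t := by
    simpa using h.fun_pow 2
  have := ((h2.const_mul (-(a / 2))).add (h.const_mul a)).add_const (a * A)
  refine this.congr_deriv ?_
  ring

lemma hasDerivAt_LL (a A t : ℝ) : HasDerivAt (fun s => LL a A s) (a / 2 + a * A) t := by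
  have hid : HasDerivAt (fun s : ℝ => (a / 2 + a * A) * s) (a / 2 + a * A) t := by
    simpa using (hasDerivAt_id t).const_mul (a / 2 + a * A)
  have := ((hid.sub_const (a / 6)).sub_const (a / 2 * A ^ 2)).sub_const (a / 2 * A)
  exact this

/-- glue a left and a right description of a function at a point -/
lemma glue {f pl pr : ℝ → ℝ} {x d : ℝ}
    (hl : f =ᶠ[𝓝[≤] x] pl) (hr : f =ᶠ[𝓝[≥] x] pr)
    (hdl : HasDerivAt pl d x) (hdr : HasDerivAt pr d x) : HasDerivAt f d x := by
  have h1 : HasDerivWithinAt f d (Iic x) x :=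
    hdl.hasDerivWithinAt.congr_of_eventuallyEq hl (hl.self_of_nhdsWithin (le_refl x))
  have h2 : HasDerivWithinAt f d (Ici x) x :=
    hdr.hasDerivWithinAt.congr_of_eventuallyEq hr (hr.self_of_nhdsWithin (le_refl x))
  rw [← hasDerivWithinAt_univ, ← Iic_union_Ici (a := x)]
  exact h1.union h2


lemma hasDerivAt_PP_neg (a A t : ℝ) :
    HasDerivAt (fun s => PP a A (-s)) (-QQ a A (-t)) t := by
  have := (hasDerivAt_PP a A (-t)).comp t (hasDerivAt_neg t)
  refine this.congr_deriv ?_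
  ring

lemma hasDerivAt_LL_neg (a A t : ℝ) :
    HasDerivAt (fun s => LL a A (-s)) (-(a / 2 + a * A)) t := by
  have := (hasDerivAt_LL a A (-t)).comp t (hasDerivAt_neg t)
  refine this.congr_deriv ?_
  ring

lemma hasDerivAt_QQ_neg (a A t : ℝ) :
    HasDerivAt (fun s => -QQ a A (-s)) (a + a * A + a * t) t := by
  have := ((hasDerivAt_QQ a A (-t)).comp t (hasDerivAt_neg t)).neg
  refine this.congr_deriv ?_
  ring

lemma hasDerivAt_quad (a t : ℝ) : HasDerivAt (fun s : ℝ => a / 2 * s ^ 2) (a * t) t := by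
  have := (hasDerivAt_pow 2 t).const_mul (a / 2)
  refine this.congr_deriv ?_
  push_cast; ring

lemma hasDerivAt_lin (a t : ℝ) : HasDerivAt (fun s : ℝ => a * s) a t := by
  simpa using (hasDerivAt_id t).const_mul a

lemma hasDerivAt_FF {a A : ℝ} (ha : 0 < a) (hA : 0 < A) (t : ℝ) :
    HasDerivAt (FF a A) (GG a A t) t := by
  have hA1 : (0:ℝ) < A + 1 := by linarith
  rcases lt_trichotomy t (-(A+1)) with h1 | h1 | h1
  · -- t < -(A+1)
    have habs : |t| = -t := abs_of_neg (by linarith)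
    have hval : GG a A t = -(a / 2 + a * A) := by
      simp only [GG, habs]
      rw [if_neg (not_le.mpr (by linarith)), if_neg (not_le.mpr (by linarith)),
        if_neg (not_le.mpr (by linarith))]
      ring
    rw [hval]
    have key : FF a A =ᶠ[𝓝 t] fun s => LL a A (-s) := by
      filter_upwards [Iio_mem_nhds h1] with s hs
      have hs' : s < -(A+1) := hs
      have habs' : |s| = -s := abs_of_neg (by linarith)
      simp only [FF, LL, habs']
      rw [if_neg (not_le.mpr (by linarith)), if_neg (not_le.mpr (by linarith))]
    exact (hasDerivAt_LL_neg a A t).congr_of_eventuallyEq key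
  · -- t = -(A+1)
    subst h1
    have habs : |(-(A+1))| = A + 1 := by rw [abs_neg, abs_of_pos hA1]
    have hval : GG a A (-(A+1)) = -(a / 2 + a * A) := by
      simp only [GG, habs]
      rw [if_neg (not_le.mpr (by linarith)), if_neg (not_le.mpr (by linarith)),
        if_pos le_rfl]
      ring
    rw [hval]
    apply glue (pl := fun s => LL a A (-s)) (pr := fun s => PP a A (-s))
    · filter_upwards [self_mem_nhdsWithin] with s hs
      have hs' : s ≤ -(A+1) := hs
      rcases eq_or_lt_of_le hs' with he | hlt
      · subst he
        simp only [FF, LL, PP, habs]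
        rw [if_neg (not_le.mpr (by linarith)), if_pos le_rfl]
        ring
      · have habs' : |s| = -s := abs_of_neg (by linarith)
        simp only [FF, LL, habs']
        rw [if_neg (not_le.mpr (by linarith)), if_neg (not_le.mpr (by linarith))]
    · filter_upwards [Ico_mem_nhdsGE (show -(A+1) < -A by linarith)] with s hs
      have hs1 : -(A+1) ≤ s := hs.1
      have hs2 : s < -A := hs.2
      have habs' : |s| = -s := abs_of_neg (by linarith)
      simp only [FF, PP, habs']
      rw [if_neg (not_le.mpr (by linarith)), if_pos (by linarith)]
    · exact hasDerivAt_LL_neg a A _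
    · have h := hasDerivAt_PP_neg a A (-(A+1))
      convert h using 1
      simp only [QQ]; ring
  · rcases lt_trichotomy t (-A) with h2 | h2 | h2
    · -- -(A+1) < t < -A
      have habs : |t| = -t := abs_of_neg (by linarith)
      have hval : GG a A t = -QQ a A (-t) := by
        simp only [GG, QQ, habs]
        rw [if_neg (not_le.mpr (by linarith)), if_neg (not_le.mpr (by linarith)),
          if_pos (by linarith)]
        ring
      rw [hval]
      have key : FF a A =ᶠ[𝓝 t] fun s => PP a A (-s) := by
        filter_upwards [Ioo_mem_nhds h1 h2] with s hs
        have habs' : |s| = -s := abs_of_neg (by linarith [hs.2])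
        simp only [FF, PP, habs']
        rw [if_neg (not_le.mpr (by linarith [hs.2])), if_pos (by linarith [hs.1])]
      exact (hasDerivAt_PP_neg a A t).congr_of_eventuallyEq key
    · -- t = -A
      subst h2
      have habs : |(-A)| = A := by rw [abs_neg, abs_of_pos hA]
      have hval : GG a A (-A) = a * (-A) := by
        simp only [GG, habs]
        rw [if_pos le_rfl]
      rw [hval]
      apply glue (pl := fun s => PP a A (-s)) (pr := fun s => a / 2 * s ^ 2)
      · filter_upwards [Ioc_mem_nhdsLE (show -(A+1) < -A by linarith)] with s hs
        rcases eq_or_lt_of_le hs.2 with he | hlt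
        · subst he
          simp only [FF, PP, habs]
          rw [if_pos le_rfl]
          ring
        · have habs' : |s| = -s := abs_of_neg (by linarith)
          simp only [FF, PP, habs']
          rw [if_neg (not_le.mpr (by linarith)), if_pos (by linarith [hs.1])]
      · filter_upwards [Ico_mem_nhdsGE (show -A < A by linarith)] with s hs
        have habs' : |s| ≤ A := abs_le.mpr ⟨hs.1, hs.2.le⟩
        simp only [FF]
        rw [if_pos habs']
      · have h := hasDerivAt_PP_neg a A (-A)
        convert h using 1
        simp only [QQ]; ring
      · exact hasDerivAt_quad a (-A)
    · rcases lt_trichotomy t A with h3 | h3 | h3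
      · -- -A < t < A
        have hval : GG a A t = a * t := by
          simp only [GG]
          rw [if_pos (abs_le.mpr ⟨by linarith, h3.le⟩)]
        rw [hval]
        have key : FF a A =ᶠ[𝓝 t] fun s => a / 2 * s ^ 2 := by
          filter_upwards [Ioo_mem_nhds h2 h3] with s hs
          simp only [FF]
          rw [if_pos (abs_le.mpr ⟨by linarith [hs.1], hs.2.le⟩)]
        exact (hasDerivAt_quad a t).congr_of_eventuallyEq key
      · -- t = A
        rw [h3]
        have habs : |A| = A := abs_of_pos hA
        have hval : GG a A A = a * A := by
          simp only [GG, habs]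
          rw [if_pos le_rfl]
        rw [hval]
        apply glue (pl := fun s => a / 2 * s ^ 2) (pr := fun s => PP a A s)
        · filter_upwards [Ioc_mem_nhdsLE (show -A < A by linarith)] with s hs
          simp only [FF]
          rw [if_pos (abs_le.mpr ⟨(hs.1).le, hs.2⟩)]
        · filter_upwards [Ico_mem_nhdsGE (show A < A + 1 by linarith)] with s hs
          rcases eq_or_lt_of_le hs.1 with he | hlt
          · rw [← he]
            simp only [FF, PP, habs]
            rw [if_pos le_rfl]
            ring
          · have habs' : |s| = s := abs_of_pos (by linarith)
            simp only [FF, PP, habs']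
            rw [if_neg (not_le.mpr (by linarith)), if_pos (by linarith [hs.2])]
        · exact hasDerivAt_quad a A
        · have h := hasDerivAt_PP a A A
          convert h using 1
          simp only [QQ]; ring
      · rcases lt_trichotomy t (A+1) with h4 | h4 | h4
        · -- A < t < A + 1
          have habs : |t| = t := abs_of_pos (by linarith)
          have hval : GG a A t = QQ a A t := by
            simp only [GG, QQ, habs]
            rw [if_neg (not_le.mpr (by linarith)), if_pos (by linarith), if_pos (by linarith)]
            ring
          rw [hval]
          have key : FF a A =ᶠ[𝓝 t] fun s => PP a A s := by
            filter_upwards [Ioo_mem_nhds h3 h4] with s hs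
            have habs' : |s| = s := abs_of_pos (by linarith [hs.1])
            simp only [FF, PP, habs']
            rw [if_neg (not_le.mpr (by linarith [hs.1])), if_pos (by linarith [hs.2])]
          exact (hasDerivAt_PP a A t).congr_of_eventuallyEq key
        · -- t = A + 1
          subst h4
          have habs : |A + 1| = A + 1 := abs_of_pos hA1
          have hval : GG a A (A+1) = a / 2 + a * A := by
            simp only [GG, habs]
            rw [if_neg (not_le.mpr (by linarith)), if_pos (by linarith), if_pos le_rfl]
            ring
          rw [hval]
          apply glue (pl := fun s => PP a A s) (pr := fun s => LL a A s)
          · filter_upwards [Ioc_mem_nhdsLE (show A < A + 1 by linarith)] with s hs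
            have habs' : |s| = s := abs_of_pos (by linarith [hs.1])
            simp only [FF, PP, habs']
            rw [if_neg (not_le.mpr (by linarith [hs.1])), if_pos hs.2]
          · filter_upwards [Ico_mem_nhdsGE (show A + 1 < A + 2 by linarith)] with s hs
            rcases eq_or_lt_of_le hs.1 with he | hlt
            · rw [← he]
              simp only [FF, PP, LL, habs]
              rw [if_neg (not_le.mpr (by linarith)), if_pos le_rfl]
              ring
            · have habs' : |s| = s := abs_of_pos (by linarith)
              simp only [FF, LL, habs']
              rw [if_neg (not_le.mpr (by linarith)), if_neg (not_le.mpr (by linarith))]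
          · have h := hasDerivAt_PP a A (A+1)
            convert h using 1
            simp only [QQ]; ring
          · exact hasDerivAt_LL a A _
        · -- A + 1 < t
          have habs : |t| = t := abs_of_pos (by linarith)
          have hval : GG a A t = a / 2 + a * A := by
            simp only [GG, habs]
            rw [if_neg (not_le.mpr (by linarith)), if_pos (by linarith),
              if_neg (not_le.mpr (by linarith))]
            ring
          rw [hval]
          have key : FF a A =ᶠ[𝓝 t] fun s => LL a A s := by
            filter_upwards [Ioi_mem_nhds h4] with s hs
            have hs' : A + 1 < s := hs
            have habs' : |s| = s := abs_of_pos (by linarith)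
            simp only [FF, LL, habs']
            rw [if_neg (not_le.mpr (by linarith)), if_neg (not_le.mpr (by linarith))]
          exact (hasDerivAt_LL a A t).congr_of_eventuallyEq key

lemma hasDerivAt_GG {a A : ℝ} (ha : 0 < a) (hA : 0 < A) (t : ℝ) :
    HasDerivAt (GG a A) (HH a A t) t := by
  have hA1 : (0:ℝ) < A + 1 := by linarith
  rcases lt_trichotomy t (-(A+1)) with h1 | h1 | h1
  · -- t < -(A+1)
    have habs : |t| = -t := abs_of_neg (by linarith)
    have hval : HH a A t = 0 := by
      simp only [HH, habs]
      rw [if_neg (not_le.mpr (by linarith)), if_neg (not_le.mpr (by linarith))]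
    rw [hval]
    have key : GG a A =ᶠ[𝓝 t] fun _ => -(a / 2 + a * A) := by
      filter_upwards [Iio_mem_nhds h1] with s hs
      have hs' : s < -(A+1) := hs
      have habs' : |s| = -s := abs_of_neg (by linarith)
      simp only [GG, habs']
      rw [if_neg (not_le.mpr (by linarith)), if_neg (not_le.mpr (by linarith)),
        if_neg (not_le.mpr (by linarith))]
      ring
    exact (hasDerivAt_const t _).congr_of_eventuallyEq key
  · -- t = -(A+1)
    subst h1
    have habs : |(-(A+1))| = A + 1 := by rw [abs_neg, abs_of_pos hA1]
    have hval : HH a A (-(A+1)) = 0 := by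
      simp only [HH, habs]
      rw [if_neg (not_le.mpr (by linarith)), if_pos le_rfl]
      ring
    rw [hval]
    apply glue (pl := fun _ => -(a / 2 + a * A)) (pr := fun s => -QQ a A (-s))
    · filter_upwards [self_mem_nhdsWithin] with s hs
      have hs' : s ≤ -(A+1) := hs
      rcases eq_or_lt_of_le hs' with he | hlt
      · subst he
        simp only [GG, QQ, habs]
        rw [if_neg (not_le.mpr (by linarith)), if_neg (not_le.mpr (by linarith)),
          if_pos le_rfl]
        ring
      · have habs' : |s| = -s := abs_of_neg (by linarith)
        simp only [GG, habs']
        rw [if_neg (not_le.mpr (by linarith)), if_neg (not_le.mpr (by linarith)),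
          if_neg (not_le.mpr (by linarith))]
        ring
    · filter_upwards [Ico_mem_nhdsGE (show -(A+1) < -A by linarith)] with s hs
      have hs1 : -(A+1) ≤ s := hs.1
      have hs2 : s < -A := hs.2
      have habs' : |s| = -s := abs_of_neg (by linarith)
      simp only [GG, QQ, habs']
      rw [if_neg (not_le.mpr (by linarith)), if_neg (not_le.mpr (by linarith)),
        if_pos (by linarith)]
      ring
    · exact hasDerivAt_const _ _
    · have h := hasDerivAt_QQ_neg a A (-(A+1))
      convert h using 1
      ring
  · rcases lt_trichotomy t (-A) with h2 | h2 | h2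
    · -- -(A+1) < t < -A
      have habs : |t| = -t := abs_of_neg (by linarith)
      have hval : HH a A t = a + a * A + a * t := by
        simp only [HH, habs]
        rw [if_neg (not_le.mpr (by linarith)), if_pos (by linarith)]
        ring
      rw [hval]
      have key : GG a A =ᶠ[𝓝 t] fun s => -QQ a A (-s) := by
        filter_upwards [Ioo_mem_nhds h1 h2] with s hs
        have habs' : |s| = -s := abs_of_neg (by linarith [hs.2])
        simp only [GG, QQ, habs']
        rw [if_neg (not_le.mpr (by linarith [hs.2])), if_neg (not_le.mpr (by linarith [hs.2])),
          if_pos (by linarith [hs.1])]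
        ring
      exact (hasDerivAt_QQ_neg a A t).congr_of_eventuallyEq key
    · -- t = -A
      subst h2
      have habs : |(-A)| = A := by rw [abs_neg, abs_of_pos hA]
      have hval : HH a A (-A) = a := by
        simp only [HH, habs]
        rw [if_pos le_rfl]
      rw [hval]
      apply glue (pl := fun s => -QQ a A (-s)) (pr := fun s => a * s)
      · filter_upwards [Ioc_mem_nhdsLE (show -(A+1) < -A by linarith)] with s hs
        rcases eq_or_lt_of_le hs.2 with he | hlt
        · subst he
          simp only [GG, QQ, habs]
          rw [if_pos le_rfl]
          ring
        · have habs' : |s| = -s := abs_of_neg (by linarith)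
          simp only [GG, QQ, habs']
          rw [if_neg (not_le.mpr (by linarith)), if_neg (not_le.mpr (by linarith)),
            if_pos (by linarith [hs.1])]
          ring
      · filter_upwards [Ico_mem_nhdsGE (show -A < A by linarith)] with s hs
        simp only [GG]
        rw [if_pos (abs_le.mpr ⟨hs.1, hs.2.le⟩)]
      · have h := hasDerivAt_QQ_neg a A (-A)
        convert h using 1
        ring
      · exact hasDerivAt_lin a (-A)
    · rcases lt_trichotomy t A with h3 | h3 | h3
      · -- -A < t < A
        have hval : HH a A t = a := by
          simp only [HH]
          rw [if_pos (abs_le.mpr ⟨by linarith, h3.le⟩)]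
        rw [hval]
        have key : GG a A =ᶠ[𝓝 t] fun s => a * s := by
          filter_upwards [Ioo_mem_nhds h2 h3] with s hs
          simp only [GG]
          rw [if_pos (abs_le.mpr ⟨by linarith [hs.1], hs.2.le⟩)]
        exact (hasDerivAt_lin a t).congr_of_eventuallyEq key
      · -- t = A
        rw [h3]
        have habs : |A| = A := abs_of_pos hA
        have hval : HH a A A = a := by
          simp only [HH, habs]
          rw [if_pos le_rfl]
        rw [hval]
        apply glue (pl := fun s => a * s) (pr := fun s => QQ a A s)
        · filter_upwards [Ioc_mem_nhdsLE (show -A < A by linarith)] with s hs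
          simp only [GG]
          rw [if_pos (abs_le.mpr ⟨(hs.1).le, hs.2⟩)]
        · filter_upwards [Ico_mem_nhdsGE (show A < A + 1 by linarith)] with s hs
          rcases eq_or_lt_of_le hs.1 with he | hlt
          · rw [← he]
            simp only [GG, QQ, habs]
            rw [if_pos le_rfl]
            ring
          · have habs' : |s| = s := abs_of_pos (by linarith)
            simp only [GG, QQ, habs']
            rw [if_neg (not_le.mpr (by linarith)), if_pos (by linarith),
              if_pos (by linarith [hs.2])]
            ring
        · exact hasDerivAt_lin a A
        · have h := hasDerivAt_QQ a A A
          convert h using 1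
          ring
      · rcases lt_trichotomy t (A+1) with h4 | h4 | h4
        · -- A < t < A + 1
          have habs : |t| = t := abs_of_pos (by linarith)
          have hval : HH a A t = a + a * A - a * t := by
            simp only [HH, habs]
            rw [if_neg (not_le.mpr (by linarith)), if_pos (by linarith)]
            ring
          rw [hval]
          have key : GG a A =ᶠ[𝓝 t] fun s => QQ a A s := by
            filter_upwards [Ioo_mem_nhds h3 h4] with s hs
            have habs' : |s| = s := abs_of_pos (by linarith [hs.1])
            simp only [GG, QQ, habs']
            rw [if_neg (not_le.mpr (by linarith [hs.1])), if_pos (by linarith [hs.1]),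
              if_pos (by linarith [hs.2])]
            ring
          exact (hasDerivAt_QQ a A t).congr_of_eventuallyEq key
        · -- t = A + 1
          subst h4
          have habs : |A + 1| = A + 1 := abs_of_pos hA1
          have hval : HH a A (A+1) = 0 := by
            simp only [HH, habs]
            rw [if_neg (not_le.mpr (by linarith)), if_pos le_rfl]
            ring
          rw [hval]
          apply glue (pl := fun s => QQ a A s) (pr := fun _ => a / 2 + a * A)
          · filter_upwards [Ioc_mem_nhdsLE (show A < A + 1 by linarith)] with s hs
            have habs' : |s| = s := abs_of_pos (by linarith [hs.1])
            simp only [GG, QQ, habs']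
            rw [if_neg (not_le.mpr (by linarith [hs.1])), if_pos (by linarith [hs.1]),
              if_pos hs.2]
            ring
          · filter_upwards [Ico_mem_nhdsGE (show A + 1 < A + 2 by linarith)] with s hs
            rcases eq_or_lt_of_le hs.1 with he | hlt
            · rw [← he]
              simp only [GG, habs]
              rw [if_neg (not_le.mpr (by linarith)), if_pos (by linarith), if_pos le_rfl]
              ring
            · have habs' : |s| = s := abs_of_pos (by linarith)
              simp only [GG, habs']
              rw [if_neg (not_le.mpr (by linarith)), if_pos (by linarith),
                if_neg (not_le.mpr (by linarith))]
              ring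
          · have h := hasDerivAt_QQ a A (A+1)
            convert h using 1
            ring
          · exact hasDerivAt_const _ _
        · -- A + 1 < t
          have habs : |t| = t := abs_of_pos (by linarith)
          have hval : HH a A t = 0 := by
            simp only [HH, habs]
            rw [if_neg (not_le.mpr (by linarith)), if_neg (not_le.mpr (by linarith))]
          rw [hval]
          have key : GG a A =ᶠ[𝓝 t] fun _ => a / 2 + a * A := by
            filter_upwards [Ioi_mem_nhds h4] with s hs
            have hs' : A + 1 < s := hs
            have habs' : |s| = s := abs_of_pos (by linarith)
            simp only [GG, habs']
            rw [if_neg (not_le.mpr (by linarith)), if_pos (by linarith),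
              if_neg (not_le.mpr (by linarith))]
            ring
          exact (hasDerivAt_const t _).congr_of_eventuallyEq key


lemma HH_bounds {a A : ℝ} (ha : 0 < a) (hA : 0 < A) (t : ℝ) :
    0 ≤ HH a A t ∧ HH a A t ≤ a := by
  simp only [HH]
  split_ifs with h1 h2
  · exact ⟨ha.le, le_rfl⟩
  · push_neg at h1
    constructor <;> nlinarith [abs_nonneg t]
  · exact ⟨le_rfl, ha.le⟩

lemma HH_eq {a A : ℝ} (t : ℝ) : HH a A t = a * min 1 (max 0 (A + 1 - |t|)) := by
  simp only [HH]
  split_ifs with h1 h2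
  · rw [max_eq_right (by linarith), min_eq_left (by linarith)]
    ring
  · push_neg at h1
    rw [max_eq_right (by linarith), min_eq_right (by linarith)]
    ring
  · push_neg at h1 h2
    rw [max_eq_left (by linarith), min_eq_right (by linarith)]
    ring

lemma GG_bound {a A : ℝ} (ha : 0 < a) (hA : 0 < A) (t : ℝ) :
    |GG a A t| ≤ a * (1 / 2 + A) := by
  rcases le_or_gt (|t|) A with h1 | h1
  · rw [GG, if_pos h1, abs_mul, abs_of_pos ha]
    nlinarith [abs_nonneg t, mul_nonneg ha.le (show (0:ℝ) ≤ 1/2 + A - |t| by linarith)]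
  · rw [GG, if_neg (not_le.mpr h1), abs_mul]
    have hsgn : |(if 0 ≤ t then (1:ℝ) else -1)| = 1 := by split_ifs <;> simp
    rw [hsgn, one_mul]
    rcases le_or_gt (|t|) (A+1) with h2 | h2
    · rw [if_pos h2, abs_of_nonneg (by
        nlinarith [mul_nonneg (mul_nonneg ha.le (show (0:ℝ) ≤ |t| - A by linarith))
          (show (0:ℝ) ≤ 2 - (|t| - A) by linarith), mul_pos ha hA])]
      nlinarith [mul_nonneg ha.le (sq_nonneg (1 - (|t| - A)))]
    · rw [if_neg (not_le.mpr h2), abs_of_pos (by positivity)]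
      have : a * (1/2 + A) = a/2 + a*A := by ring
      linarith

lemma FF_nonneg {a A : ℝ} (ha : 0 < a) (hA : 0 < A) (t : ℝ) : 0 ≤ FF a A t := by
  simp only [FF]
  split_ifs with h1 h2
  · positivity
  · push_neg at h1
    nlinarith [mul_nonneg (mul_nonneg ha.le (sq_nonneg (|t| - A)))
        (show (0:ℝ) ≤ 3 - (|t| - A) by linarith),
      mul_nonneg (mul_nonneg ha.le hA.le) (show (0:ℝ) ≤ |t| - A by linarith),
      mul_nonneg (mul_nonneg ha.le hA.le) hA.le]
  · push_neg at h1 h2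
    nlinarith [mul_pos ha hA, mul_pos (mul_pos ha hA) hA,
      mul_nonneg (show (0:ℝ) ≤ a/2 + a*A by positivity)
        (show (0:ℝ) ≤ |t| - (A+1) by linarith)]

lemma FF_zero {a A : ℝ} (hA : 0 < A) : FF a A 0 = 0 := by
  simp [FF, abs_zero, hA.le]

lemma my_abs_min (z x y : ℝ) : |min z x - min z y| ≤ |x - y| := by
  rcases min_cases z x with ⟨e1, l1⟩ | ⟨e1, l1⟩ <;>
    rcases min_cases z y with ⟨e2, l2⟩ | ⟨e2, l2⟩ <;>
    rw [e1, e2] <;> apply abs_le.2 <;> constructor <;>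
    linarith [le_abs_self (x - y), neg_abs_le (x - y), abs_nonneg (x - y)]

lemma my_abs_max (z x y : ℝ) : |max z x - max z y| ≤ |x - y| := by
  rcases max_cases z x with ⟨e1, l1⟩ | ⟨e1, l1⟩ <;>
    rcases max_cases z y with ⟨e2, l2⟩ | ⟨e2, l2⟩ <;>
    rw [e1, e2] <;> apply abs_le.2 <;> constructor <;>
    linarith [le_abs_self (x - y), neg_abs_le (x - y), abs_nonneg (x - y)]

theorem counterexample_loss_properties
    (a A c : ℝ) (ha : 0 < a) (hA : 0 < A)
    (f : ℝ → ℝ)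
    (hf : ∀ x : ℝ, f x =
      if |x - c| ≤ A then a / 2 * |x - c| ^ 2
      else if |x - c| ≤ A + 1 then
        -(a / 6) * (|x - c| - A) ^ 3 + a / 2 * (|x - c| - A) ^ 2
          + a * A * |x - c| - a / 2 * A ^ 2
      else (a / 2 + a * A) * |x - c| - a / 6 - a / 2 * A ^ 2 - a / 2 * A) :
    (∀ x, DifferentiableAt ℝ f x) ∧
    (∀ x, DifferentiableAt ℝ (deriv f) x) ∧
    (∀ x : ℝ, deriv (deriv f) x =
      if |x - c| ≤ A then a
      else if |x - c| ≤ A + 1 then -(a * |x - c|) + a + a * A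
      else 0) ∧
    (∀ x, 0 ≤ deriv (deriv f) x ∧ deriv (deriv f) x ≤ a) ∧
    LipschitzWith a.toNNReal (deriv f) ∧
    LipschitzWith a.toNNReal (deriv (deriv f)) ∧
    (∀ x, |deriv f x| ≤ a * (1 / 2 + A)) ∧
    (∀ x, f c ≤ f x) := by
  have hfF : f = fun x => FF a A (x - c) := by
    funext x
    rw [hf x]
    simp only [FF, sq_abs]
  subst hfF
  have hD1 : ∀ x : ℝ, HasDerivAt (fun x => FF a A (x - c)) (GG a A (x - c)) x := by
    intro x
    have := (hasDerivAt_FF ha hA (x - c)).comp x ((hasDerivAt_id x).sub_const c)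
    simpa [Function.comp_def] using this
  have hD2 : ∀ x : ℝ, HasDerivAt (fun x => GG a A (x - c)) (HH a A (x - c)) x := by
    intro x
    have := (hasDerivAt_GG ha hA (x - c)).comp x ((hasDerivAt_id x).sub_const c)
    simpa [Function.comp_def] using this
  have hd1 : (deriv fun x => FF a A (x - c)) = fun x => GG a A (x - c) :=
    funext fun x => (hD1 x).deriv
  have hd2 : (deriv (deriv fun x => FF a A (x - c))) = fun x => HH a A (x - c) := by
    rw [hd1]; exact funext fun x => (hD2 x).deriv
  refine ⟨fun x => (hD1 x).differentiableAt, ?_, ?_, ?_, ?_, ?_, ?_, ?_⟩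
  · intro x
    rw [hd1]
    exact (hD2 x).differentiableAt
  · intro x
    simp only [hd2, HH]
  · intro x
    simp only [hd2]
    exact HH_bounds ha hA (x - c)
  · rw [hd1]
    apply lipschitzWith_of_nnnorm_deriv_le (fun x => (hD2 x).differentiableAt)
    intro x
    rw [(hD2 x).deriv, ← NNReal.coe_le_coe, coe_nnnorm, Real.norm_eq_abs,
      Real.coe_toNNReal _ ha.le]
    rcases HH_bounds ha hA (x - c) with ⟨hb1, hb2⟩
    rw [abs_of_nonneg hb1]
    exact hb2
  · rw [hd2]
    apply LipschitzWith.of_dist_le_mul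
    intro x y
    rw [Real.dist_eq, Real.dist_eq, Real.coe_toNNReal _ ha.le, HH_eq, HH_eq]
    set u := max 0 (A + 1 - |x - c|) with hu
    set v := max 0 (A + 1 - |y - c|) with hv
    have c1 : |min 1 u - min 1 v| ≤ |u - v| := my_abs_min 1 u v
    have c2 : |u - v| ≤ |(A + 1 - |x - c|) - (A + 1 - |y - c|)| := my_abs_max 0 _ _
    have c3 : (A + 1 - |x - c|) - (A + 1 - |y - c|) = |y - c| - |x - c| := by ring
    have c4 : |(|y - c| - |x - c|)| ≤ |(y - c) - (x - c)| := abs_abs_sub_abs_le_abs_sub _ _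
    have c5 : (y - c) - (x - c) = y - x := by ring
    have c6 : |y - x| = |x - y| := abs_sub_comm _ _
    have chain : |min 1 u - min 1 v| ≤ |x - y| := by
      rw [c3] at c2
      rw [c5, c6] at c4
      linarith
    calc |a * min 1 u - a * min 1 v| = a * |min 1 u - min 1 v| := by
          rw [← mul_sub, abs_mul, abs_of_pos ha]
      _ ≤ a * |x - y| := mul_le_mul_of_nonneg_left chain ha.le
  · intro x
    rw [hd1]
    exact GG_bound ha hA (x - c)
  · intro x
    show FF a A (c - c) ≤ FF a A (x - c)
    rw [sub_self, FF_zero hA]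
    exact FF_nonneg ha hA (x - c)
end

section
/- Let a₁, a₂, α > 0 with 0 < αa₁ < 1, 0 < αa₂ < 1 and a₁ ≠ a₂, and let r ∈ ℕ, r ≥ 1. Then (a₁(1 − αa₁)^{2r} + a₂(1 − αa₂)^{2r}) / (a₁(1 − αa₁)^r + a₂(1 − αa₂)^r) · (1 − αa₁)^r − (1 − αa₂)^{2r} ≠ 0. -/
/-!
STATEMENT 18: the nonvanishing quantity used to define the offset `b₂` in
the FO-BLO divergence counterexample.
-/

theorem counterexample_offset_nonzero
    (a₁ a₂ α : ℝ) (ha₁ : 0 < a₁) (ha₂ : 0 < a₂) (hα : 0 < α)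
    (hαa₁ : α * a₁ < 1) (hαa₂ : α * a₂ < 1) (hne : a₁ ≠ a₂)
    (r : ℕ) (hr : 1 ≤ r) :
    (a₁ * (1 - α * a₁) ^ (2 * r) + a₂ * (1 - α * a₂) ^ (2 * r))
        / (a₁ * (1 - α * a₁) ^ r + a₂ * (1 - α * a₂) ^ r)
        * (1 - α * a₁) ^ r
      - (1 - α * a₂) ^ (2 * r) ≠ 0 := by
  have h1 : (0:ℝ) < 1 - α * a₁ := by linarith
  have h2 : (0:ℝ) < 1 - α * a₂ := by linarith
  set c₁ : ℝ := (1 - α * a₁) ^ r with hc₁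
  set c₂ : ℝ := (1 - α * a₂) ^ r with hc₂
  have hc₁pos : 0 < c₁ := pow_pos h1 r
  have hc₂pos : 0 < c₂ := pow_pos h2 r
  have hrne : r ≠ 0 := by omega
  have hcne : c₁ ≠ c₂ := by
    have hbase : 1 - α * a₁ ≠ 1 - α * a₂ := by
      intro h
      apply hne
      have : α * a₁ = α * a₂ := by linarith
      exact mul_left_cancel₀ (ne_of_gt hα) this
    rcases lt_or_gt_of_ne hbase with h | h
    · exact ne_of_lt (pow_lt_pow_left₀ h h1.le hrne)
    · exact ne_of_gt (pow_lt_pow_left₀ h h2.le hrne)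
  have hden : a₁ * c₁ + a₂ * c₂ ≠ 0 := by positivity
  have hsq₁ : (1 - α * a₁) ^ (2 * r) = c₁ ^ 2 := by
    rw [hc₁, mul_comm 2 r, pow_mul]
  have hsq₂ : (1 - α * a₂) ^ (2 * r) = c₂ ^ 2 := by
    rw [hc₂, mul_comm 2 r, pow_mul]
  rw [hsq₁, hsq₂]
  have key : (a₁ * c₁ ^ 2 + a₂ * c₂ ^ 2) / (a₁ * c₁ + a₂ * c₂) * c₁ - c₂ ^ 2
      = (c₁ - c₂) * (a₁ * c₁ * (c₁ + c₂) + a₂ * c₂ ^ 2) / (a₁ * c₁ + a₂ * c₂) := by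
    field_simp
    ring
  rw [key]
  apply div_ne_zero _ hden
  exact mul_ne_zero (sub_ne_zero_of_ne hcne) (by positivity)
end
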